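/- ∫₀^∞ ∫₀^∞ y z D(x,y,z) dy dz = x³/6 + 2π² x for all real x, where D(x,y,z) = H(x,y+z). -/

import Mathlib

open Real MeasureTheory

/-- The kernel `H(x,y) = (1/(4π))(1/cosh((x−y)/4) − 1/cosh((x+y)/4))`. -/
noncomputable def Hker (x y : ℝ) : ℝ :=
  (1 / (4 * Real.pi)) *
    (1 / Real.cosh ((x - y) / 4) - 1 / Real.cosh ((x + y) / 4))

/-- The kernel `D(x,y,z) = H(x, y+z)`. -/
noncomputable def Dker (x y z : ℝ) : ℝ := Hker x (y + z)

section aux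
open Set Filter

/- basic bound: 1/cosh t ≤ 2 exp(-|t|) -/
lemma sech_le (t : ℝ) : 1 / Real.cosh t ≤ 2 * Real.exp (-|t|) := by
  have h1 : Real.exp |t| / 2 ≤ Real.cosh t := by
    rcases abs_cases t with ⟨h, _⟩ | ⟨h, _⟩
    · rw [h, Real.cosh_eq]; nlinarith [Real.exp_pos t, Real.exp_pos (-t)]
    · rw [h, Real.cosh_eq]; nlinarith [Real.exp_pos t, Real.exp_pos (-t)]
  have h2 : (0:ℝ) < Real.exp |t| / 2 := by positivity
  have := one_div_le_one_div_of_le h2 h1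
  calc 1 / Real.cosh t ≤ 1 / (Real.exp |t| / 2) := this
    _ = 2 * Real.exp (-|t|) := by rw [Real.exp_neg]; field_simp

lemma integrable_pow_exp_neg_abs (n : ℕ) :
    Integrable (fun t : ℝ => |t| ^ n * Real.exp (-|t|)) := by
  have hIoi : IntegrableOn (fun t : ℝ => |t| ^ n * Real.exp (-|t|)) (Ioi 0) := by
    have h := Real.GammaIntegral_convergent (s := (n + 1 : ℝ)) (by positivity)
    apply h.congr_fun ?_ measurableSet_Ioi
    intro t ht
    simp only [abs_of_pos (show (0:ℝ) < t from ht), add_sub_cancel_right, Real.rpow_natCast]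
    ring
  have m : MeasurableEmbedding fun x : ℝ => -x := (Homeomorph.neg ℝ).measurableEmbedding
  have hIic : IntegrableOn (fun t : ℝ => |t| ^ n * Real.exp (-|t|)) (Iic 0) := by
    rw [IntegrableOn, ← Measure.map_neg_eq_self (volume : Measure ℝ), m.restrict_map,
      m.integrable_map_iff]
    simp_rw [Function.comp_def, abs_neg, neg_preimage, neg_Iic, neg_zero]
    exact Iff.mpr integrableOn_Ici_iff_integrableOn_Ioi hIoi
  have := hIic.union hIoi
  rwa [Iic_union_Ioi, integrableOn_univ] at this

lemma integrable_pow_sech (n : ℕ) : Integrable (fun t : ℝ => t ^ n / Real.cosh t) := by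
  refine (Integrable.const_mul (integrable_pow_exp_neg_abs n) 2).mono' ?_ ?_
  · exact (Continuous.div (continuous_pow n) Real.continuous_cosh
      (fun t => (Real.cosh_pos t).ne')).aestronglyMeasurable
  · refine Eventually.of_forall fun t => ?_
    have h0 : (0:ℝ) < Real.cosh t := Real.cosh_pos t
    rw [Real.norm_eq_abs, abs_div, abs_of_pos h0]
    calc |t ^ n| / Real.cosh t = |t| ^ n * (1 / Real.cosh t) := by
          rw [abs_pow]; ring
      _ ≤ |t| ^ n * (2 * Real.exp (-|t|)) := by
          exact mul_le_mul_of_nonneg_left (sech_le t) (by positivity)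
      _ = 2 * (|t| ^ n * Real.exp (-|t|)) := by ring

lemma integral_sech : ∫ t : ℝ, 1 / Real.cosh t = π := by
  have hderiv : ∀ t : ℝ, HasDerivAt (fun s : ℝ => 2 * Real.arctan (Real.exp s))
      (1 / Real.cosh t) t := by
    intro t
    have h1 : HasDerivAt Real.exp (Real.exp t) t := Real.hasDerivAt_exp t
    have h2 := (Real.hasDerivAt_arctan (Real.exp t)).comp t h1
    have h3 := h2.const_mul 2
    refine h3.congr_deriv (Eq.symm ?_)
    rw [Real.cosh_eq]
    have he : Real.exp t ≠ 0 := (Real.exp_pos t).ne'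
    rw [Real.exp_neg]
    field_simp
    nlinarith [Real.exp_pos t, sq_nonneg (Real.exp t)]
  have hint : Integrable (fun t : ℝ => 1 / Real.cosh t) := by
    simpa using integrable_pow_sech 0
  have hbot : Tendsto (fun s : ℝ => 2 * Real.arctan (Real.exp s)) atBot (nhds 0) := by
    have : Tendsto (fun s : ℝ => Real.arctan (Real.exp s)) atBot (nhds (Real.arctan 0)) :=
      (Real.continuous_arctan.tendsto 0).comp Real.tendsto_exp_atBot
    simpa [Real.arctan_zero] using this.const_mul 2
  have htop : Tendsto (fun s : ℝ => 2 * Real.arctan (Real.exp s)) atTop (nhds π) := by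
    have : Tendsto (fun s : ℝ => Real.arctan (Real.exp s)) atTop (nhds (π / 2)) :=
      (Real.tendsto_arctan_atTop.mono_right nhdsWithin_le_nhds).comp Real.tendsto_exp_atTop
    have h2 := this.const_mul 2
    simpa [mul_div_cancel₀] using h2
  have := MeasureTheory.integral_of_hasDerivAt_of_tendsto hderiv hint hbot htop
  rw [this]; ring

lemma hasSum_beta3 :
    HasSum (fun k : ℕ => (-1 : ℝ) ^ k / (2 * (k:ℝ) + 1) ^ 3) (π ^ 3 / 32) := by
  have h := hasSum_L_function_mod_four_eval_three
  have hinj : Function.Injective (fun k : ℕ => 2 * k + 1) := by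
    intro a b hab; simpa using hab
  have hz : ∀ n : ℕ, n ∉ Set.range (fun k : ℕ => 2 * k + 1) →
      (1 : ℝ) / (n : ℝ) ^ 3 * Real.sin (π * n / 2) = 0 := by
    intro n hn
    have : Even n := by
      rcases Nat.even_or_odd n with he | ho
      · exact he
      · exact absurd (by rcases ho with ⟨k, hk⟩; exact ⟨k, by simp; omega⟩) hn
    rcases this with ⟨m, hm⟩
    have : (π * n / 2 : ℝ) = m * π := by
      subst hm; push_cast; ring
    rw [this, Real.sin_nat_mul_pi, mul_zero]
  have h2 := (Function.Injective.hasSum_iff hinj hz).mpr h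
  have heq : ((fun n : ℕ => (1:ℝ) / (n : ℝ) ^ 3 * Real.sin (π * n / 2)) ∘
      (fun k : ℕ => 2 * k + 1)) =
      fun k : ℕ => (-1 : ℝ) ^ k / (2 * (k:ℝ) + 1) ^ 3 := by
    funext k
    simp only [Function.comp_apply]
    have harg : (π * ((2 * k + 1 : ℕ) : ℝ) / 2) = π / 2 + k * π := by push_cast; ring
    rw [harg, Real.sin_add_nat_mul_pi, Real.sin_pi_div_two]
    push_cast; ring
  rwa [heq] at h2

noncomputable def Fser (n : ℕ) (t : ℝ) : ℝ :=
  2 * (-1 : ℝ) ^ n * (t ^ 2 * Real.exp (-((2 * n + 1) * t)))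

lemma Fser_integrableOn (n : ℕ) : IntegrableOn (Fser n) (Ioi 0) := by
  have hg : IntegrableOn (fun t : ℝ => 2 * (Real.exp (-t) * t ^ ((3:ℝ) - 1))) (Ioi 0) :=
    (Real.GammaIntegral_convergent (by norm_num : (0:ℝ) < 3)).const_mul 2
  refine hg.mono' ?_ ?_
  · exact Continuous.aestronglyMeasurable (by unfold Fser; fun_prop)
  · filter_upwards [ae_restrict_mem measurableSet_Ioi] with t ht
    have ht0 : (0:ℝ) < t := ht
    have h1 : Real.exp (-((2 * n + 1) * t)) ≤ Real.exp (-t) := by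
      apply Real.exp_le_exp.mpr
      nlinarith [ht0]
    have h2 : t ^ ((3:ℝ) - 1) = t ^ 2 := by
      rw [show (3:ℝ) - 1 = ((2:ℕ):ℝ) by norm_num, Real.rpow_natCast]
    have habs : ‖Fser n t‖ = 2 * (t ^ 2 * Real.exp (-((2 * n + 1) * t))) := by
      rw [Real.norm_eq_abs, Fser, abs_mul, abs_mul, abs_pow, abs_neg, abs_one, one_pow,
        abs_mul, abs_of_nonneg (by positivity : (0:ℝ) ≤ t ^ 2), abs_of_pos (Real.exp_pos _)]
      norm_num
    rw [habs, h2]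
    have := mul_le_mul_of_nonneg_left h1 (le_of_lt (by positivity : (0:ℝ) < t ^ 2))
    nlinarith [this]

lemma Fser_integral (n : ℕ) :
    ∫ t in Ioi (0:ℝ), Fser n t = 4 * (-1 : ℝ) ^ n / (2 * (n:ℝ) + 1) ^ 3 := by
  have hr : (0:ℝ) < 2 * n + 1 := by positivity
  have h := Real.integral_rpow_mul_exp_neg_mul_Ioi (a := 3) (r := 2 * n + 1)
    (by norm_num) hr
  have h2 : ∀ t ∈ Ioi (0:ℝ), t ^ ((3:ℝ) - 1) * Real.exp (-((2 * n + 1) * t))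
      = t ^ 2 * Real.exp (-((2 * n + 1) * t)) := by
    intro t ht
    rw [show (3:ℝ) - 1 = ((2:ℕ):ℝ) by norm_num, Real.rpow_natCast]
  rw [setIntegral_congr_fun measurableSet_Ioi h2] at h
  have hG : Real.Gamma 3 = 2 := by
    rw [show (3:ℝ) = ((2:ℕ):ℝ) + 1 by norm_num, Real.Gamma_nat_eq_factorial]
    norm_num
  rw [show ((1:ℝ) / (2 * (n:ℝ) + 1)) ^ (3:ℝ) = ((1:ℝ) / (2 * (n:ℝ) + 1)) ^ (3:ℕ) by
    rw [← Real.rpow_natCast]; norm_num, hG] at h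
  unfold Fser
  rw [MeasureTheory.integral_const_mul, h, div_pow, one_pow]
  ring

lemma Fser_norm (n : ℕ) (t : ℝ) : ‖Fser n t‖ = 2 * (t ^ 2 * Real.exp (-((2 * n + 1) * t))) := by
  rw [Real.norm_eq_abs, Fser, abs_mul, abs_mul, abs_pow, abs_neg, abs_one, one_pow,
    abs_mul, abs_of_nonneg (by positivity : (0:ℝ) ≤ t ^ 2), abs_of_pos (Real.exp_pos _)]
  norm_num

lemma hasSum_Fser {t : ℝ} (ht : 0 < t) :
    HasSum (fun n : ℕ => Fser n t) (t ^ 2 / Real.cosh t) := by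
  have hx : ‖(-Real.exp (-(2 * t)))‖ < 1 := by
    rw [norm_neg, Real.norm_eq_abs, abs_of_pos (Real.exp_pos _)]
    rw [Real.exp_lt_one_iff]
    linarith
  have hgeo := hasSum_geometric_of_norm_lt_one hx
  have h := hgeo.mul_left (2 * t ^ 2 * Real.exp (-t))
  have heq : ∀ n : ℕ, Fser n t = 2 * t ^ 2 * Real.exp (-t) * (-Real.exp (-(2 * t))) ^ n := by
    intro n
    symm
    rw [neg_pow, ← Real.exp_nat_mul, Fser]
    rw [show ((n:ℝ) * -(2*t)) = (-((2*n+1)*t)) - (-t) by push_cast; ring, Real.exp_sub]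
    have h2 : Real.exp (-t) ≠ 0 := (Real.exp_pos _).ne'
    field_simp
  have hval : 2 * t ^ 2 * Real.exp (-t) * (1 - -Real.exp (-(2 * t)))⁻¹
      = t ^ 2 / Real.cosh t := by
    rw [Real.cosh_eq, sub_neg_eq_add]
    rw [show (-(2*t)) = -t + -t by ring, Real.exp_add]
    have h1 : (0:ℝ) < Real.exp t := Real.exp_pos t
    have h2 : (0:ℝ) < Real.exp (-t) := Real.exp_pos (-t)
    have h3 : Real.exp t * Real.exp (-t) = 1 := by
      rw [← Real.exp_add]; simp
    field_simp
    nlinarith [h3]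
  rw [← hval]
  exact h.congr_fun heq

lemma integral_sq_sech_Ioi : ∫ t in Ioi (0:ℝ), t ^ 2 / Real.cosh t = π ^ 3 / 8 := by
  have hnn : ∀ n : ℕ, ((-1:ℝ) ^ n) * ((-1:ℝ) ^ n) = 1 := by
    intro n; rw [← mul_pow]; norm_num
  have hnorm : ∀ n : ℕ, ∫ t in Ioi (0:ℝ), ‖Fser n t‖ = 4 / (2 * (n:ℝ) + 1) ^ 3 := by
    intro n
    have heq : ∀ t : ℝ, ‖Fser n t‖ = (-1:ℝ) ^ n * Fser n t := by
      intro t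
      rw [Fser_norm, Fser]
      calc 2 * (t ^ 2 * Real.exp (-((2 * n + 1) * t)))
          = ((-1:ℝ)^n * (-1:ℝ)^n) * (2 * (t ^ 2 * Real.exp (-((2 * n + 1) * t)))) := by
            rw [hnn n, one_mul]
        _ = (-1:ℝ) ^ n * (2 * (-1:ℝ) ^ n * (t ^ 2 * Real.exp (-((2 * n + 1) * t)))) := by ring
    simp_rw [heq]
    rw [MeasureTheory.integral_const_mul, Fser_integral n]
    linear_combination (4 / (2 * (n:ℝ) + 1) ^ 3) * hnn n
  have hsummable : Summable (fun n : ℕ => ∫ t in Ioi (0:ℝ), ‖Fser n t‖) := by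
    simp_rw [hnorm]
    have h1 : Summable (fun n : ℕ => 4 / ((n:ℝ) + 1) ^ 3) := by
      have := (summable_nat_add_iff (f := fun n : ℕ => 4 / (n:ℝ) ^ 3) 1).mpr
        (((Real.summable_one_div_nat_pow.mpr (by norm_num : 1 < 3)).mul_left 4).congr
          (fun n => by rw [mul_one_div]))
      exact this.congr (fun n => by push_cast; ring_nf)
    refine Summable.of_nonneg_of_le (fun n => by positivity) (fun n => ?_) h1
    apply div_le_div_of_nonneg_left (by norm_num) (by positivity)
    have : ((n:ℝ) + 1) ≤ 2 * n + 1 := by push_cast; linarith [Nat.cast_nonneg (α := ℝ) n]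
    exact pow_le_pow_left₀ (by positivity) this 3
  have hIntSum := MeasureTheory.hasSum_integral_of_summable_integral_norm
    (μ := volume.restrict (Ioi 0)) Fser_integrableOn hsummable
  have hInner : ∫ t in Ioi (0:ℝ), (∑' n, Fser n t) = ∫ t in Ioi (0:ℝ), t ^ 2 / Real.cosh t := by
    apply integral_congr_ae
    filter_upwards [ae_restrict_mem measurableSet_Ioi] with t ht
    exact (hasSum_Fser ht).tsum_eq
  rw [hInner] at hIntSum
  have hIntSum2 : HasSum (fun n : ℕ => 4 * (-1:ℝ) ^ n / (2 * (n:ℝ) + 1) ^ 3)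
      (∫ t in Ioi (0:ℝ), t ^ 2 / Real.cosh t) :=
    hIntSum.congr_fun (fun n => (Fser_integral n).symm)
  have hbeta : HasSum (fun n : ℕ => 4 * (-1:ℝ) ^ n / (2 * (n:ℝ) + 1) ^ 3) (π ^ 3 / 8) := by
    have := hasSum_beta3.mul_left 4
    rw [show 4 * (π ^ 3 / 32) = π ^ 3 / 8 by ring] at this
    exact this.congr_fun (fun n => by rw [mul_div_assoc])
  exact (hbeta.unique hIntSum2).symm

lemma integral_sq_sech : ∫ t : ℝ, t ^ 2 / Real.cosh t = π ^ 3 / 4 := by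
  have h := integral_comp_abs (f := fun t : ℝ => t ^ 2 / Real.cosh t)
  simp only [sq_abs, Real.cosh_abs] at h
  rw [h, integral_sq_sech_Ioi]
  ring

lemma integral_odd_pow_sech {k : ℕ} (hk : Odd k) : ∫ t : ℝ, t ^ k / Real.cosh t = 0 := by
  have h := integral_neg_eq_self (fun t : ℝ => t ^ k / Real.cosh t) volume
  simp only [Real.cosh_neg, hk.neg_pow, neg_div, integral_neg] at h
  linarith [h]

section B
variable (x : ℝ)

noncomputable def Phi (t : ℝ) : ℝ := (x + 4 * t) ^ 3 / Real.cosh t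

lemma Phi_eq : Phi x = fun t : ℝ =>
    x ^ 3 * (t ^ 0 / Real.cosh t) + 12 * x ^ 2 * (t ^ 1 / Real.cosh t)
      + 48 * x * (t ^ 2 / Real.cosh t) + 64 * (t ^ 3 / Real.cosh t) := by
  funext t
  have hc : Real.cosh t ≠ 0 := (Real.cosh_pos t).ne'
  rw [Phi]
  field_simp
  ring

lemma Phi_integrable : Integrable (Phi x) := by
  rw [Phi_eq]
  exact ((((integrable_pow_sech 0).const_mul _).add
    ((integrable_pow_sech 1).const_mul _)).add
    ((integrable_pow_sech 2).const_mul _)).add ((integrable_pow_sech 3).const_mul _)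

lemma Phi_integral : ∫ t : ℝ, Phi x t = π * x ^ 3 + 12 * π ^ 3 * x := by
  have h0 := (integrable_pow_sech 0).const_mul (x ^ 3)
  have h1 := (integrable_pow_sech 1).const_mul (12 * x ^ 2)
  have h2 := (integrable_pow_sech 2).const_mul (48 * x)
  have h3 := (integrable_pow_sech 3).const_mul (64 : ℝ)
  have h01 : Integrable (fun t : ℝ => x ^ 3 * (t ^ 0 / Real.cosh t)
      + 12 * x ^ 2 * (t ^ 1 / Real.cosh t)) := h0.add h1
  have h012 : Integrable (fun t : ℝ => x ^ 3 * (t ^ 0 / Real.cosh t)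
      + 12 * x ^ 2 * (t ^ 1 / Real.cosh t) + 48 * x * (t ^ 2 / Real.cosh t)) := h01.add h2
  have hPhi : (fun t : ℝ => Phi x t) = Phi x := rfl
  rw [hPhi, Phi_eq]
  rw [integral_add h012 h3, integral_add h01 h2, integral_add h0 h1]
  simp only [integral_const_mul]
  rw [integral_odd_pow_sech (by decide : Odd 1), integral_odd_pow_sech (by decide : Odd 3),
    integral_sq_sech]
  simp only [pow_zero, integral_sech]
  ring

noncomputable def gfun (u : ℝ) : ℝ := u ^ 3 / Real.cosh ((x - u) / 4)

lemma gfun_eq : gfun x = fun u => Phi x ((u - x) / 4) := by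
  funext u
  rw [gfun, Phi, show (x + 4 * ((u - x) / 4)) = u by ring,
    show ((x - u) / 4) = -((u - x)/4) by ring, Real.cosh_neg]

lemma gfun_integrable : Integrable (gfun x) := by
  rw [gfun_eq]
  have h1 : Integrable (fun v : ℝ => Phi x (v / 4)) :=
    (Phi_integrable x).comp_div (by norm_num)
  have h2 := h1.comp_sub_right x
  exact h2

lemma gfun_integral : ∫ u : ℝ, gfun x u = 4 * (π * x ^ 3 + 12 * π ^ 3 * x) := by
  rw [gfun_eq]
  rw [show (fun u : ℝ => Phi x ((u - x) / 4)) = fun u : ℝ => (fun v => Phi x (v / 4)) (u - x)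
    from rfl]
  rw [integral_sub_right_eq_self (fun v : ℝ => Phi x (v / 4)) x]
  rw [MeasureTheory.Measure.integral_comp_div (Phi x) 4, Phi_integral]
  rw [smul_eq_mul]
  norm_num

lemma stepB : ∫ u in Ioi (0:ℝ), u ^ 3 / 6 * Hker x u = x ^ 3 / 6 + 2 * π ^ 2 * x := by
  -- the two pieces
  have hA : IntegrableOn (gfun x) (Ioi 0) := (gfun_integrable x).integrableOn
  have hgneg : Integrable (fun u : ℝ => gfun x (-u)) := by
    have := (gfun_integrable x).comp_mul_left' (R := (-1:ℝ)) (by norm_num)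
    exact this.congr (Eventually.of_forall fun u => by norm_num)
  have hB : IntegrableOn (fun u : ℝ => -gfun x (-u)) (Ioi 0) := hgneg.neg.integrableOn
  have hBeq : ∀ u : ℝ, u ^ 3 / Real.cosh ((x + u) / 4) = -gfun x (-u) := by
    intro u
    rw [gfun, show ((x - -u) / 4) = (x + u)/4 by ring]
    ring
  -- pointwise splitting of the integrand
  have hsplit : ∀ u : ℝ, u ^ 3 / 6 * Hker x u
      = (1 / (24 * π)) * gfun x u - (1 / (24 * π)) * (-gfun x (-u)) := by
    intro u
    simp only [Hker, gfun, sub_neg_eq_add]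
    have hc1 : Real.cosh ((x - u) / 4) ≠ 0 := (Real.cosh_pos _).ne'
    have hc2 : Real.cosh ((x + u) / 4) ≠ 0 := (Real.cosh_pos _).ne'
    field_simp
    ring
  calc ∫ u in Ioi (0:ℝ), u ^ 3 / 6 * Hker x u
      = ∫ u in Ioi (0:ℝ), ((1 / (24 * π)) * gfun x u - (1 / (24 * π)) * (-gfun x (-u))) := by
        exact setIntegral_congr_fun measurableSet_Ioi (fun u _ => hsplit u)
    _ = (1 / (24 * π)) * (∫ u in Ioi (0:ℝ), gfun x u)
        - (1 / (24 * π)) * (∫ u in Ioi (0:ℝ), (-gfun x (-u))) := by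
        rw [integral_sub (hA.const_mul _) (hB.const_mul _), integral_const_mul, integral_const_mul]
    _ = (1 / (24 * π)) * ((∫ u in Ioi (0:ℝ), gfun x u) + (∫ u in Iic (0:ℝ), gfun x u)) := by
        rw [integral_neg, integral_comp_neg_Ioi 0 (gfun x), neg_zero]
        ring
    _ = (1 / (24 * π)) * (∫ u : ℝ, gfun x u) := by
        congr 1
        have hu := setIntegral_union (f := gfun x) (μ := volume)
          (Iic_disjoint_Ioi (le_refl (0:ℝ))) measurableSet_Ioi
          (gfun_integrable x).integrableOn (gfun_integrable x).integrableOn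
        rw [Iic_union_Ioi, setIntegral_univ] at hu
        rw [hu]; ring
    _ = x ^ 3 / 6 + 2 * π ^ 2 * x := by
        rw [gfun_integral]
        have hπ : π ≠ 0 := Real.pi_ne_zero
        field_simp
        ring
end B

lemma Hker_continuous (x : ℝ) : Continuous (Hker x) := by
  unfold Hker
  refine continuous_const.mul (Continuous.sub ?_ ?_) <;>
  exact continuous_const.div
    (Real.continuous_cosh.comp (by continuity)) (fun u => (Real.cosh_pos _).ne')

lemma Hker_bound (x : ℝ) : ∀ u : ℝ, 0 ≤ u →
    |Hker x u| ≤ (Real.exp (|x| / 4) / π) * Real.exp (-(u / 4)) := by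
  intro u hu
  have hπ : (0:ℝ) < π := Real.pi_pos
  have key : ∀ v : ℝ, u - |x| ≤ |v| → 1 / Real.cosh (v / 4)
      ≤ 2 * (Real.exp (|x| / 4) * Real.exp (-(u / 4))) := by
    intro v hv
    refine (sech_le (v / 4)).trans ?_
    rw [← Real.exp_add]
    apply mul_le_mul_of_nonneg_left _ (by norm_num)
    apply Real.exp_le_exp.mpr
    rw [abs_div, abs_of_pos (by norm_num : (0:ℝ) < 4)]
    have : u - |x| ≤ |v| := hv
    linarith [this]
  have k1 := key (x - u) (by cases abs_cases x with
    | inl h => cases abs_cases (x - u) with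
      | inl h2 => linarith [h.1, h2.1]
      | inr h2 => linarith [h.1, h2.1]
    | inr h => cases abs_cases (x - u) with
      | inl h2 => linarith [h.1, h2.1]
      | inr h2 => linarith [h.1, h2.1])
  have k2 := key (x + u) (by cases abs_cases x with
    | inl h => cases abs_cases (x + u) with
      | inl h2 => linarith [h.1, h2.1]
      | inr h2 => linarith [h.1, h2.1]
    | inr h => cases abs_cases (x + u) with
      | inl h2 => linarith [h.1, h2.1]
      | inr h2 => linarith [h.1, h2.1])
  have c1 : (0:ℝ) < Real.cosh ((x - u) / 4) := Real.cosh_pos _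
  have c2 : (0:ℝ) < Real.cosh ((x + u) / 4) := Real.cosh_pos _
  rw [Hker, abs_mul, abs_of_pos (by positivity : (0:ℝ) < 1 / (4 * π))]
  have habs : |1 / Real.cosh ((x - u) / 4) - 1 / Real.cosh ((x + u) / 4)|
      ≤ 1 / Real.cosh ((x - u) / 4) + 1 / Real.cosh ((x + u) / 4) := by
    refine (abs_sub _ _).trans ?_
    rw [abs_of_pos (by positivity), abs_of_pos (by positivity)]
  calc 1 / (4 * π) * |1 / Real.cosh ((x - u) / 4) - 1 / Real.cosh ((x + u) / 4)|
      ≤ 1 / (4 * π) * (1 / Real.cosh ((x - u) / 4) + 1 / Real.cosh ((x + u) / 4)) :=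
        mul_le_mul_of_nonneg_left habs (by positivity)
    _ ≤ 1 / (4 * π) * (2 * (Real.exp (|x| / 4) * Real.exp (-(u / 4)))
          + 2 * (Real.exp (|x| / 4) * Real.exp (-(u / 4)))) :=
        mul_le_mul_of_nonneg_left (add_le_add k1 k2) (by positivity)
    _ = (Real.exp (|x| / 4) / π) * Real.exp (-(u / 4)) := by field_simp; ring

lemma q_integrableOn : IntegrableOn (fun t : ℝ => t * Real.exp (-(t / 4))) (Ioi 0) := by
  refine ((exp_neg_integrableOn_Ioi 0 (by norm_num : (0:ℝ) < 1/8)).const_mul 8).mono' ?_ ?_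
  · exact (continuous_id.mul (Real.continuous_exp.comp (by continuity))).aestronglyMeasurable
  · filter_upwards [ae_restrict_mem measurableSet_Ioi] with t ht
    have ht0 : (0:ℝ) < t := ht
    rw [Real.norm_eq_abs, abs_mul, abs_of_pos ht0, abs_of_pos (Real.exp_pos _)]
    have h1 : t * Real.exp (-(t / 8)) ≤ 8 := by
      have h2 : t / 8 ≤ Real.exp (t / 8) := by
        have := Real.add_one_le_exp (t / 8); linarith
      have h3 : (0:ℝ) < Real.exp (t / 8) := Real.exp_pos _
      rw [Real.exp_neg, mul_inv_le_iff₀ h3]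
      nlinarith
    calc t * Real.exp (-(t / 4))
        = (t * Real.exp (-(t / 8))) * Real.exp (-(t / 8)) := by
          rw [mul_assoc, ← Real.exp_add]; ring_nf
      _ ≤ 8 * Real.exp (-(t / 8)) := by
          apply mul_le_mul_of_nonneg_right h1 (Real.exp_pos _).le
      _ = 8 * Real.exp (-(1/8) * t) := by ring_nf

lemma poly_Ioo (u : ℝ) (hu : 0 < u) : ∫ y in Ioo (0:ℝ) u, y * (u - y) = u ^ 3 / 6 := by
  rw [← integral_Ioc_eq_integral_Ioo, ← intervalIntegral.integral_of_le hu.le]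
  have : ∀ y : ℝ, y * (u - y) = u * y - y ^ 2 := fun y => by ring
  simp_rw [this]
  have hi1 : IntervalIntegrable (fun y : ℝ => u * y) volume 0 u :=
    (intervalIntegral.intervalIntegrable_id).const_mul u
  have hi2 : IntervalIntegrable (fun y : ℝ => y ^ 2) volume 0 u :=
    intervalIntegral.intervalIntegrable_pow 2
  rw [intervalIntegral.integral_sub hi1 hi2, intervalIntegral.integral_const_mul,
    integral_id, integral_pow]
  ring

section A
variable (x : ℝ)

lemma prod_integrable : Integrable (fun p : ℝ × ℝ => p.1 * p.2 * Hker x (p.1 + p.2))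
    ((volume.restrict (Ioi 0)).prod (volume.restrict (Ioi 0))) := by
  set K := Real.exp (|x| / 4) / π with hK
  have hKpos : 0 < K := by have := Real.pi_pos; positivity
  have hq := q_integrableOn
  have hdom : Integrable (fun p : ℝ × ℝ =>
      K * ((p.1 * Real.exp (-(p.1 / 4))) * (p.2 * Real.exp (-(p.2 / 4)))))
      ((volume.restrict (Ioi 0)).prod (volume.restrict (Ioi 0))) :=
    (hq.mul_prod hq).const_mul K
  refine hdom.mono' ?_ ?_
  · exact Continuous.aestronglyMeasurable (by
      exact (continuous_fst.mul continuous_snd).mul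
        ((Hker_continuous x).comp (continuous_fst.add continuous_snd)))
  · rw [Measure.prod_restrict]
    filter_upwards [ae_restrict_mem (measurableSet_Ioi.prod measurableSet_Ioi)] with p hp
    obtain ⟨h1, h2⟩ := hp
    have h1 : (0:ℝ) < p.1 := h1
    have h2 : (0:ℝ) < p.2 := h2
    rw [Real.norm_eq_abs, abs_mul, abs_mul, abs_of_pos h1, abs_of_pos h2]
    have hb := Hker_bound x (p.1 + p.2) (by linarith)
    calc p.1 * p.2 * |Hker x (p.1 + p.2)|
        ≤ p.1 * p.2 * (K * Real.exp (-((p.1 + p.2) / 4))) := by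
          apply mul_le_mul_of_nonneg_left hb (by positivity)
      _ = K * ((p.1 * Real.exp (-(p.1 / 4))) * (p.2 * Real.exp (-(p.2 / 4)))) := by
          rw [show (-((p.1 + p.2) / 4)) = -(p.1 / 4) + -(p.2 / 4) by ring, Real.exp_add]
          ring

noncomputable def Ffun (p : ℝ × ℝ) : ℝ :=
  Set.indicator {q : ℝ × ℝ | 0 < q.1 ∧ q.1 < q.2} (fun q => q.1 * (q.2 - q.1) * Hker x q.2) p

lemma Ffun_comp : (fun p : ℝ × ℝ => Ffun x (p.1, p.1 + p.2))
    = (Ioi (0:ℝ) ×ˢ Ioi (0:ℝ)).indicator (fun p : ℝ × ℝ => p.1 * p.2 * Hker x (p.1 + p.2)) := by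
  funext p
  rw [Ffun, Set.indicator_apply, Set.indicator_apply]
  have hiff : (p.1, p.1 + p.2) ∈ {q : ℝ × ℝ | 0 < q.1 ∧ q.1 < q.2}
      ↔ p ∈ Ioi (0:ℝ) ×ˢ Ioi (0:ℝ) := by
    simp only [Set.mem_setOf_eq, Set.mem_prod, Set.mem_Ioi]
    constructor
    · rintro ⟨ha, hb⟩; exact ⟨ha, by linarith⟩
    · rintro ⟨ha, hb⟩; exact ⟨ha, by linarith⟩
  rw [if_congr hiff rfl rfl]
  congr 1
  simp

lemma Ffun_meas : MeasurableSet {q : ℝ × ℝ | 0 < q.1 ∧ q.1 < q.2} := by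
  apply MeasurableSet.inter
  · exact measurableSet_lt measurable_const measurable_fst
  · exact measurableSet_lt measurable_fst measurable_snd

lemma Ffun_integrable : Integrable (Ffun x) (volume.prod volume) := by
  have hmp := measurePreserving_prod_add (volume : Measure ℝ) volume
  have hT : MeasurableEmbedding (fun p : ℝ × ℝ => (p.1, p.1 + p.2)) :=
    (MeasurableEquiv.shearAddRight ℝ).measurableEmbedding
  rw [← hmp.map_eq, hT.integrable_map_iff]
  have : (Ffun x) ∘ (fun p : ℝ × ℝ => (p.1, p.1 + p.2))
      = (Ioi (0:ℝ) ×ˢ Ioi (0:ℝ)).indicator (fun p : ℝ × ℝ => p.1 * p.2 * Hker x (p.1 + p.2)) :=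
    Ffun_comp x
  rw [this, integrable_indicator_iff (measurableSet_Ioi.prod measurableSet_Ioi)]
  rw [IntegrableOn, ← Measure.prod_restrict]
  exact prod_integrable x

lemma stepA : (∫ y in Ioi (0:ℝ), ∫ z in Ioi (0:ℝ), y * z * Hker x (y + z))
    = ∫ u in Ioi (0:ℝ), u ^ 3 / 6 * Hker x u := by
  have hmp := measurePreserving_prod_add (volume : Measure ℝ) volume
  have hT : MeasurableEmbedding (fun p : ℝ × ℝ => (p.1, p.1 + p.2)) :=
    (MeasurableEquiv.shearAddRight ℝ).measurableEmbedding
  calc (∫ y in Ioi (0:ℝ), ∫ z in Ioi (0:ℝ), y * z * Hker x (y + z))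
      = ∫ p : ℝ × ℝ, p.1 * p.2 * Hker x (p.1 + p.2)
          ∂((volume.restrict (Ioi 0)).prod (volume.restrict (Ioi 0))) :=
        by exact (integral_integral (f := fun y z : ℝ => y * z * Hker x (y + z))
          (prod_integrable x))
    _ = ∫ p : ℝ × ℝ, (Ioi (0:ℝ) ×ˢ Ioi (0:ℝ)).indicator
          (fun p : ℝ × ℝ => p.1 * p.2 * Hker x (p.1 + p.2)) p ∂(volume.prod volume) := by
        rw [Measure.prod_restrict, ← integral_indicator (measurableSet_Ioi.prod measurableSet_Ioi)]
    _ = ∫ p : ℝ × ℝ, Ffun x (p.1, p.1 + p.2) ∂(volume.prod volume) := by rw [Ffun_comp]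
    _ = ∫ p : ℝ × ℝ, Ffun x p ∂(volume.prod volume) := by
        exact hmp.integral_comp hT (Ffun x)
    _ = ∫ u : ℝ, (∫ y : ℝ, Ffun x (y, u)) := integral_prod_symm (Ffun x) (Ffun_integrable x)
    _ = ∫ u : ℝ, (Ioi (0:ℝ)).indicator (fun u => u ^ 3 / 6 * Hker x u) u := by
        congr 1
        funext u
        have hset : ∀ y : ℝ, Ffun x (y, u) = (Ioo (0:ℝ) u).indicator
            (fun y => y * (u - y) * Hker x u) y := by
          intro y
          rw [Ffun, Set.indicator_apply, Set.indicator_apply]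
          simp only [Set.mem_setOf_eq, Set.mem_Ioo]
        simp_rw [hset]
        rw [integral_indicator measurableSet_Ioo]
        rcases le_or_gt u 0 with hu | hu
        · rw [Set.indicator_of_notMem (by simpa using hu), Ioo_eq_empty (by linarith),
            Measure.restrict_empty, integral_zero_measure]
        · rw [Set.indicator_of_mem (by simpa using hu)]
          rw [MeasureTheory.integral_mul_const, poly_Ioo u hu]
    _ = ∫ u in Ioi (0:ℝ), u ^ 3 / 6 * Hker x u := integral_indicator measurableSet_Ioi
end A

end aux

/-- `∫₀^∞ ∫₀^∞ y z D(x,y,z) dy dz = x³/6 + 2π² x`. -/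
theorem stmt7 (x : ℝ) :
    (∫ y in Set.Ioi (0 : ℝ), ∫ z in Set.Ioi (0 : ℝ), y * z * Dker x y z) =
      x ^ 3 / 6 + 2 * Real.pi ^ 2 * x := by
  simp only [Dker]
  rw [stepA x, stepB x]
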